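/- Let U ∈ ℂ^{N_r×N_s} satisfy U^H U = I_{N_s}, let W_D ∈ ℂ^{N_s×N_s} be invertible, let Σ, W_α ∈ ℝ^{N_s×N_s} be invertible diagonal matrices, let D_q ∈ ℝ^{N_s×N_s} be a diagonal matrix with nonnegative entries, let σ_n² > 0 and p > 0, and write Σ = diag(σ_1,…,σ_{N_s}), W_α = diag(1−f_1,…,1−f_{N_s}) with 0 ≤ f_i < 1, and D_q² = diag((1−f_i)f_i l_i) with l_i ≥ 0. Set G = W_D^H W_α U^H, K = G U Σ, and Φ = σ_n² G G^H + W_D^H D_q² W_D. Then p^{N_s} · det(K^H Φ⁻¹ K + (1/p) I_{N_s}) = ∏_{i=1}^{N_s} ( p σ_i²/(σ_n² + f_i l_i/(1−f_i)) + 1 ), i.e., the capacity N_s log₂ p + log₂ det(K^H Φ⁻¹ K + (1/p) I_{N_s}) equals Σ_{i=1}^{N_s} log₂(q(b_i) + 1) with q(b_i) = p σ_i²/(σ_n² + f_i l_i/(1−f_i)). -/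

import Mathlib

open Matrix

/-- Main closed-form capacity expression: with `Uᴴ U = I`, `W_D` invertible,
`Σ = diag(σᵢ)` and `W_α = diag(1 - fᵢ)` invertible real diagonal, `D_q ≥ 0` real
diagonal with `D_q² = diag((1 - fᵢ) fᵢ lᵢ)`, `G = W_Dᴴ W_α Uᴴ`, `K = G U Σ` and
`Φ = σₙ² G Gᴴ + W_Dᴴ D_q² W_D`, one has
`p^{N_s} det(Kᴴ Φ⁻¹ K + (1/p) I) = ∏ᵢ (p σᵢ²/(σₙ² + fᵢ lᵢ/(1 - fᵢ)) + 1)`,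
i.e. `N_s log₂ p + log₂ det(Kᴴ Φ⁻¹ K + (1/p) I) = Σᵢ log₂(q(bᵢ) + 1)` with
`q(bᵢ) = p σᵢ²/(σₙ² + fᵢ lᵢ/(1 - fᵢ))`. -/
theorem stmt_9
    (Nr Ns : ℕ) (hNr : 0 < Nr) (hNs : 0 < Ns) (hNrNs : Ns ≤ Nr)
    (U : Matrix (Fin Nr) (Fin Ns) ℂ) (hU : Uᴴ * U = 1)
    (WD : Matrix (Fin Ns) (Fin Ns) ℂ) (hWD : IsUnit WD.det)
    (σ l f : Fin Ns → ℝ)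
    (hσ : ∀ i, σ i ≠ 0) (hl : ∀ i, 0 ≤ l i)
    (hf : ∀ i, 0 ≤ f i ∧ f i < 1)
    (dq : Fin Ns → ℝ) (hdq : ∀ i, 0 ≤ dq i)
    (hdq2 : ∀ i, (dq i) ^ 2 = (1 - f i) * f i * l i)
    (σn2 p : ℝ) (hσn2 : 0 < σn2) (hp : 0 < p)
    (G : Matrix (Fin Ns) (Fin Nr) ℂ)
    (hG : G = WDᴴ * Matrix.diagonal (fun i => ((1 - f i : ℝ) : ℂ)) * Uᴴ)
    (K : Matrix (Fin Ns) (Fin Ns) ℂ)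
    (hK : K = G * U * Matrix.diagonal (fun i => (σ i : ℂ)))
    (Φ : Matrix (Fin Ns) (Fin Ns) ℂ)
    (hΦ : Φ = σn2 • (G * Gᴴ) +
      WDᴴ * (Matrix.diagonal (fun i => (dq i : ℂ))) ^ 2 * WD) :
    (p : ℂ) ^ Ns *
      (Kᴴ * Φ⁻¹ * K + (p : ℂ)⁻¹ • (1 : Matrix (Fin Ns) (Fin Ns) ℂ)).det =
      ∏ i, ((p * (σ i) ^ 2 / (σn2 + f i * l i / (1 - f i)) + 1 : ℝ) : ℂ) ∧
    (Ns : ℝ) * Real.logb 2 p +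
      Real.logb 2
        ((Kᴴ * Φ⁻¹ * K + (p : ℂ)⁻¹ • (1 : Matrix (Fin Ns) (Fin Ns) ℂ)).det.re) =
      ∑ i, Real.logb 2 (p * (σ i) ^ 2 / (σn2 + f i * l i / (1 - f i)) + 1) := by
  -- basic positivity facts
  have hf1 : ∀ i, (0:ℝ) < 1 - f i := fun i => by linarith [(hf i).2]
  set d : Fin Ns → ℝ := fun i => σn2 * (1 - f i)^2 + (dq i)^2 with hd_def
  have hd : ∀ i, 0 < d i := fun i => by
    have := sq_nonneg (dq i)
    have := mul_pos hσn2 (pow_pos (hf1 i) 2)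
    simp only [hd_def]; nlinarith
  set c : Fin Ns → ℝ := fun i => (σ i)^2 * (1 - f i)^2 / d i + p⁻¹ with hc_def
  have hc : ∀ i, 0 < c i := fun i => by
    have h1 : 0 ≤ (σ i)^2 * (1 - f i)^2 / d i :=
      div_nonneg (by positivity) (hd i).le
    have := inv_pos.mpr hp
    simp only [hc_def]; linarith
  set Wα : Matrix (Fin Ns) (Fin Ns) ℂ :=
    Matrix.diagonal (fun i => ((1 - f i : ℝ) : ℂ)) with hWα_def
  set Sm : Matrix (Fin Ns) (Fin Ns) ℂ :=
    Matrix.diagonal (fun i => ((σ i : ℝ) : ℂ)) with hSm_def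
  set Dm : Matrix (Fin Ns) (Fin Ns) ℂ :=
    Matrix.diagonal (fun i => ((d i : ℝ) : ℂ)) with hDm_def
  have hWαH : Wαᴴ = Wα := by
    simp [hWα_def, Matrix.diagonal_conjTranspose]
  have hSmH : Smᴴ = Sm := by
    simp [hSm_def, Matrix.diagonal_conjTranspose]
  -- K in closed form
  have hK' : K = WDᴴ * Wα * Sm := by
    rw [hK, hG, Matrix.mul_assoc (WDᴴ * Wα) Uᴴ U, hU, Matrix.mul_one]
  -- Φ in closed form
  have hGGH : G * Gᴴ = WDᴴ * (Wα * Wα) * WD := by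
    rw [hG]
    simp only [Matrix.conjTranspose_mul, Matrix.conjTranspose_conjTranspose, hWαH]
    simp only [← Matrix.mul_assoc]
    rw [Matrix.mul_assoc (WDᴴ * Wα) Uᴴ U, hU, Matrix.mul_one, Matrix.mul_assoc]
  have hΦ' : Φ = WDᴴ * Dm * WD := by
    rw [hΦ, hGGH]
    rw [show (Matrix.diagonal (fun i => ((dq i : ℝ) : ℂ))) ^ 2
        = Matrix.diagonal (fun i => ((dq i : ℝ) : ℂ) ^ 2) by
      rw [sq, Matrix.diagonal_mul_diagonal]; congr 1; funext i; ring]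
    have : σn2 • (WDᴴ * (Wα * Wα) * WD) = WDᴴ * (σn2 • (Wα * Wα)) * WD := by
      rw [Matrix.mul_smul, Matrix.smul_mul]
    rw [this, ← Matrix.add_mul, ← Matrix.mul_add]
    congr 2
    rw [hWα_def, Matrix.diagonal_mul_diagonal, ← Matrix.diagonal_smul,
      Matrix.diagonal_add, hDm_def]
    refine congrArg Matrix.diagonal (funext fun i => ?_)
    simp only [hd_def, Pi.smul_apply, Complex.real_smul]
    push_cast
    ring
  -- invertibility side facts
  have hWDH : IsUnit (WDᴴ).det := by
    rw [Matrix.det_conjTranspose]; exact hWD.star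
  have hdC : ∀ i, ((d i : ℝ) : ℂ) ≠ 0 := fun i => by
    exact_mod_cast Complex.ofReal_ne_zero.mpr (hd i).ne'
  -- inverse of Φ
  have hΦinv : Φ⁻¹ = WD⁻¹ * (Dm⁻¹ * (WDᴴ)⁻¹) := by
    rw [hΦ', Matrix.mul_inv_rev, Matrix.mul_inv_rev]
  -- the key diagonalization
  have key : Kᴴ * Φ⁻¹ * K + (p : ℂ)⁻¹ • (1 : Matrix (Fin Ns) (Fin Ns) ℂ)
      = Matrix.diagonal (fun i => ((c i : ℝ) : ℂ)) := by
    have hKH : Kᴴ = Sm * Wα * WD := by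
      rw [hK']
      simp only [Matrix.conjTranspose_mul, Matrix.conjTranspose_conjTranspose,
        hWαH, hSmH, Matrix.mul_assoc]
    have hDminv : Dm⁻¹ = Matrix.diagonal (fun i => ((d i : ℝ) : ℂ)⁻¹) := by
      apply Matrix.inv_eq_right_inv
      rw [hDm_def, Matrix.diagonal_mul_diagonal, ← Matrix.diagonal_one]
      exact congrArg Matrix.diagonal (funext fun i => mul_inv_cancel₀ (hdC i))
    rw [hKH, hΦinv, hK']
    have h1 : WD * (WD⁻¹ * (Dm⁻¹ * (WDᴴ)⁻¹)) = Dm⁻¹ * (WDᴴ)⁻¹ := by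
      rw [← Matrix.mul_assoc, Matrix.mul_nonsing_inv _ hWD, Matrix.one_mul]
    have h2 : (WDᴴ)⁻¹ * (WDᴴ * Wα * Sm) = Wα * Sm := by
      rw [Matrix.mul_assoc WDᴴ, ← Matrix.mul_assoc (WDᴴ)⁻¹,
        Matrix.nonsing_inv_mul _ hWDH, Matrix.one_mul]
    calc Sm * Wα * WD * (WD⁻¹ * (Dm⁻¹ * (WDᴴ)⁻¹)) * (WDᴴ * Wα * Sm)
          + (p : ℂ)⁻¹ • (1 : Matrix (Fin Ns) (Fin Ns) ℂ)
        = Sm * Wα * (Dm⁻¹ * ((WDᴴ)⁻¹ * (WDᴴ * Wα * Sm)))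
          + (p : ℂ)⁻¹ • (1 : Matrix (Fin Ns) (Fin Ns) ℂ) := by
          rw [Matrix.mul_assoc (Sm * Wα) WD, h1]
          rw [Matrix.mul_assoc (Sm * Wα), Matrix.mul_assoc Dm⁻¹]
      _ = Sm * Wα * (Dm⁻¹ * (Wα * Sm))
          + (p : ℂ)⁻¹ • (1 : Matrix (Fin Ns) (Fin Ns) ℂ) := by rw [h2]
      _ = Matrix.diagonal (fun i => ((c i : ℝ) : ℂ)) := by
          rw [hDminv, hSm_def, hWα_def, Matrix.smul_one_eq_diagonal]
          simp only [Matrix.diagonal_mul_diagonal, Matrix.diagonal_add]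
          refine congrArg Matrix.diagonal (funext fun i => ?_)
          simp only [hc_def]
          have := hdC i
          push_cast
          field_simp
  -- the scalar identity
  have hscal : ∀ i, p * c i = p * (σ i)^2 / (σn2 + f i * l i / (1 - f i)) + 1 := by
    intro i
    have hden : σn2 + f i * l i / (1 - f i) ≠ 0 := by
      have : 0 ≤ f i * l i / (1 - f i) :=
        div_nonneg (mul_nonneg (hf i).1 (hl i)) (hf1 i).le
      positivity
    have hdne : d i ≠ 0 := (hd i).ne'
    have hd2 : d i = (1 - f i) * (σn2 * (1 - f i) + f i * l i) := by
      simp only [hd_def, hdq2 i]; ring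
    have h1f : (1 : ℝ) - f i ≠ 0 := (hf1 i).ne'
    have hs : σn2 * (1 - f i) + f i * l i ≠ 0 := by
      have h1 : 0 ≤ f i * l i := mul_nonneg (hf i).1 (hl i)
      have h2 := mul_pos hσn2 (hf1 i)
      exact (by linarith : (0:ℝ) < σn2 * (1 - f i) + f i * l i).ne'
    simp only [hc_def]
    rw [hd2]
    field_simp
  -- first goal in ℂ
  have goal1 : (p : ℂ) ^ Ns *
      (Kᴴ * Φ⁻¹ * K + (p : ℂ)⁻¹ • (1 : Matrix (Fin Ns) (Fin Ns) ℂ)).det =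
      ∏ i, ((p * (σ i) ^ 2 / (σn2 + f i * l i / (1 - f i)) + 1 : ℝ) : ℂ) := by
    rw [key, Matrix.det_diagonal]
    have hstep : (p : ℂ) ^ Ns * ∏ i, ((c i : ℝ) : ℂ)
        = ∏ i : Fin Ns, ((p : ℝ) : ℂ) * ((c i : ℝ) : ℂ) := by
      rw [Finset.prod_mul_distrib, Finset.prod_const, Finset.card_univ,
        Fintype.card_fin]
    rw [hstep]
    refine Finset.prod_congr rfl fun i _ => ?_
    rw [← Complex.ofReal_mul, hscal i]
  refine ⟨goal1, ?_⟩
  -- second goal: real logs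
  have hre : (Kᴴ * Φ⁻¹ * K + (p : ℂ)⁻¹ • (1 : Matrix (Fin Ns) (Fin Ns) ℂ)).det.re
      = ∏ i, c i := by
    rw [key, Matrix.det_diagonal, ← Complex.ofReal_prod, Complex.ofReal_re]
  rw [hre]
  have hlogb : Real.logb 2 (∏ i, c i) = ∑ i, Real.logb 2 (c i) := by
    rw [Real.logb, Real.log_prod (fun i _ => (hc i).ne'), Finset.sum_div]
    rfl
  rw [hlogb]
  have : ∀ i, Real.logb 2 (p * (σ i) ^ 2 / (σn2 + f i * l i / (1 - f i)) + 1)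
      = Real.logb 2 p + Real.logb 2 (c i) := by
    intro i
    rw [← hscal i, Real.logb_mul hp.ne' (hc i).ne']
  simp only [this, Finset.sum_add_distrib, Finset.sum_const, Finset.card_univ,
    Fintype.card_fin, nsmul_eq_mul]
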